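/- (Full exclusion: optimal prices and the opening-new-markets threshold.) In the full-exclusion binary model: (i) for every μ ∈ [0,1], every maximizer of R_μ := (1−μ)·R_L + μ·R_H over [0,∞) lies in [p_L*, p̄_L] ∪ {p_H*}; (ii) there exists μ̂ ∈ (0,1) such that for every μ ∈ [0,1], p_H* is a maximizer of R_μ over [0,∞) if and only if μ ≥ μ̂, and for every μ > μ̂, p_H* is the unique maximizer of R_μ over [0,∞). -/

import Mathlib

/-- (Full exclusion: optimal prices and the opening-new-markets threshold.)
In the full-exclusion binary model: (i) every maximizer of the aggregate revenue
`R_μ = (1−μ)R_L + μR_H` over `[0,∞)` lies in `[p_L*, p̄_L] ∪ {p_H*}`; (ii) there is a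
threshold `μ̂ ∈ (0,1)` such that `p_H*` is a maximizer iff `μ ≥ μ̂`, and the unique
maximizer for `μ > μ̂`. -/
theorem stmt_17
    (plL pbL plH pbH pLs pHs : ℝ)
    (DL DH RL RH : ℝ → ℝ)
    (hRL : RL = fun q => q * DL q) (hRH : RH = fun q => q * DH q)
    (h0L : 0 < plL) (hL : plL < pbL)
    (hDLcont : ContinuousOn DL (Set.Ici 0))
    (hDLconst : ∀ q ∈ Set.Icc (0:ℝ) plL, DL q = DL plL)
    (hDLpos0 : 0 < DL plL)
    (hDLC1 : ContDiffOn ℝ 1 DL (Set.Ioo plL pbL))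
    (hDLpos : ∀ q ∈ Set.Ioo plL pbL, 0 < DL q)
    (hDL' : ∀ q ∈ Set.Ioo plL pbL, deriv DL q < 0)
    (hDL0 : ∀ q ∈ Set.Ici pbL, DL q = 0)
    (hRLconc : StrictConcaveOn ℝ (Set.Icc plL pbL) RL)
    (hpLs : pLs ∈ Set.Ioo plL pbL)
    (hRLmax : ∀ q ∈ Set.Ici (0:ℝ), q ≠ pLs → RL q < RL pLs)
    (h0H : 0 < plH) (hH : plH < pbH)
    (hDHcont : ContinuousOn DH (Set.Ici 0))
    (hDHconst : ∀ q ∈ Set.Icc (0:ℝ) plH, DH q = DH plH)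
    (hDHpos0 : 0 < DH plH)
    (hDHC1 : ContDiffOn ℝ 1 DH (Set.Ioo plH pbH))
    (hDHpos : ∀ q ∈ Set.Ioo plH pbH, 0 < DH q)
    (hDH' : ∀ q ∈ Set.Ioo plH pbH, deriv DH q < 0)
    (hDH0 : ∀ q ∈ Set.Ici pbH, DH q = 0)
    (hRHconc : StrictConcaveOn ℝ (Set.Icc plH pbH) RH)
    (hpHs : pHs ∈ Set.Ioo plH pbH)
    (hRHmax : ∀ q ∈ Set.Ici (0:ℝ), q ≠ pHs → RH q < RH pHs)
    (hexcl : pbL < pHs) :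
    (∀ μ ∈ Set.Icc (0:ℝ) 1, ∀ q ∈ Set.Ici (0:ℝ),
      (∀ q' ∈ Set.Ici (0:ℝ),
        (1 - μ) * RL q' + μ * RH q' ≤ (1 - μ) * RL q + μ * RH q) →
      q ∈ Set.Icc pLs pbL ∪ {pHs}) ∧
    ∃ μhat ∈ Set.Ioo (0:ℝ) 1,
      (∀ μ ∈ Set.Icc (0:ℝ) 1,
        ((∀ q' ∈ Set.Ici (0:ℝ),
          (1 - μ) * RL q' + μ * RH q' ≤ (1 - μ) * RL pHs + μ * RH pHs) ↔ μhat ≤ μ)) ∧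
      (∀ μ ∈ Set.Icc (0:ℝ) 1, μhat < μ →
        ∀ q ∈ Set.Ici (0:ℝ), q ≠ pHs →
          (1 - μ) * RL q + μ * RH q < (1 - μ) * RL pHs + μ * RH pHs) := by
  -- Basic facts
  have hRL0 : ∀ q, pbL ≤ q → RL q = 0 := fun q hq => by
    simp only [hRL]; rw [hDL0 q hq]; ring
  have hRLpHs : RL pHs = 0 := hRL0 pHs hexcl.le
  have hDLnn : ∀ q, 0 ≤ q → 0 ≤ DL q := by
    intro q hq
    rcases le_or_gt q plL with h | h
    · rw [hDLconst q ⟨hq, h⟩]; exact hDLpos0.le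
    · rcases lt_or_ge q pbL with h2 | h2
      · exact (hDLpos q ⟨h, h2⟩).le
      · rw [hDL0 q h2]
  have hRLnn : ∀ q, 0 ≤ q → 0 ≤ RL q := fun q hq => by
    simp only [hRL]; exact mul_nonneg hq (hDLnn q hq)
  have hRHle : ∀ q, 0 ≤ q → RH q ≤ RH pHs := by
    intro q hq
    rcases eq_or_ne q pHs with rfl | h
    · exact le_rfl
    · exact (hRHmax q hq h).le
  have hRLle : ∀ q, 0 ≤ q → RL q ≤ RL pLs := by
    intro q hq
    rcases eq_or_ne q pLs with rfl | h
    · exact le_rfl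
    · exact (hRLmax q hq h).le
  have hpHs0 : (0:ℝ) < pHs := lt_trans h0H hpHs.1
  have hpLs0 : (0:ℝ) < pLs := lt_trans h0L hpLs.1
  have hRLpLs : 0 < RL pLs := by
    simp only [hRL]; exact mul_pos hpLs0 (hDLpos pLs hpLs)
  -- monotonicity of RH on [0, pHs]
  have keyH : ∀ a b, plH ≤ a → a < b → b ≤ pHs → RH a < RH b := by
    intro a b ha hab hb
    rcases hb.lt_or_eq with hb' | rfl
    · have haH : a ∈ Set.Icc plH pbH := ⟨ha, by linarith [hpHs.2]⟩
      have hpH : pHs ∈ Set.Icc plH pbH := ⟨hpHs.1.le, hpHs.2.le⟩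
      have hne : a ≠ pHs := by intro h; rw [h] at hab; linarith
      have hd : 0 < pHs - a := by linarith
      have htpos : 0 < (pHs - b)/(pHs - a) := div_pos (by linarith) hd
      have hspos : 0 < (b - a)/(pHs - a) := div_pos (by linarith) hd
      have hts : (pHs - b)/(pHs - a) + (b - a)/(pHs - a) = 1 := by
        rw [← add_div]
        rw [show pHs - b + (b - a) = pHs - a by ring]
        exact div_self hd.ne'
      have hcomb : ((pHs - b)/(pHs - a)) * a + ((b - a)/(pHs - a)) * pHs = b := by
        field_simp
        ring
      have hconc := hRHconc.2 haH hpH hne htpos hspos hts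
      simp only [smul_eq_mul] at hconc
      rw [hcomb] at hconc
      have hlt : RH a < RH pHs := hRHmax a (Set.mem_Ici.2 (by linarith)) hne
      have h2 : ((pHs - b)/(pHs - a)) * RH a + ((b - a)/(pHs - a)) * RH a = RH a := by
        rw [← add_mul, hts, one_mul]
      nlinarith [mul_lt_mul_of_pos_left hlt hspos]
    · exact hRHmax a (Set.mem_Ici.2 (by linarith)) (ne_of_lt hab)
  have hstepH : ∀ z, 0 ≤ z → z < plH → RH z < RH plH := by
    intro z hz hzp
    simp only [hRH]
    rw [hDHconst z ⟨hz, hzp.le⟩]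
    exact mul_lt_mul_of_pos_right hzp hDHpos0
  have hmonoH : ∀ x y, 0 ≤ x → x < y → y ≤ pHs → RH x < RH y := by
    intro x y hx hxy hy
    rcases le_or_gt y plH with h1 | h1
    · simp only [hRH]
      rw [hDHconst x ⟨hx, by linarith⟩, hDHconst y ⟨by linarith, h1⟩]
      exact mul_lt_mul_of_pos_right hxy hDHpos0
    · rcases le_or_gt plH x with h2 | h2
      · exact keyH x y h2 hxy hy
      · exact lt_trans (hstepH x hx h2) (keyH plH y le_rfl h1 hy)
  -- strict combination lemma
  have hcombine : ∀ μ a1 a2 b1 b2 : ℝ, 0 ≤ μ → μ ≤ 1 → a1 < a2 → b1 < b2 →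
      (1-μ)*a1 + μ*b1 < (1-μ)*a2 + μ*b2 := by
    intro μ a1 a2 b1 b2 h0 h1 ha hb
    rcases h0.lt_or_eq with h | h
    · have := mul_lt_mul_of_pos_left hb h
      have := mul_le_mul_of_nonneg_left ha.le (by linarith : (0:ℝ) ≤ 1-μ)
      linarith
    · subst h; linarith
  constructor
  · -- part (i)
    intro μ hμ q hq hmax
    rw [Set.mem_union, Set.mem_Icc, Set.mem_singleton_iff]
    by_contra hcon
    push_neg at hcon
    obtain ⟨h1, h2⟩ := hcon
    rcases lt_or_ge q pLs with hlt | hge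
    · have hA := hRLmax q hq (ne_of_lt hlt)
      have hB := hmonoH q pLs hq hlt (by linarith [hpLs.2])
      have hstrict := hcombine μ (RL q) (RL pLs) (RH q) (RH pLs) hμ.1 hμ.2 hA hB
      have hmax' := hmax pLs (Set.mem_Ici.2 hpLs0.le)
      linarith
    · have hgt : pbL < q := h1 hge
      have hRLq : RL q = 0 := hRL0 q hgt.le
      have hRHq : RH q < RH pHs := hRHmax q hq h2
      have hmax' := hmax pHs (Set.mem_Ici.2 hpHs0.le)
      rw [hRLq, hRLpHs] at hmax'
      have hμ0 : μ = 0 := by nlinarith [hμ.1]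
      subst hμ0
      have hmaxL := hmax pLs (Set.mem_Ici.2 hpLs0.le)
      rw [hRLq] at hmaxL
      linarith
  · -- part (ii)
    have hup : ∀ μ0 μ1 : ℝ, (∀ q ∈ Set.Ici (0:ℝ),
        (1 - μ0) * RL q + μ0 * RH q ≤ (1 - μ0) * RL pHs + μ0 * RH pHs) → μ0 ≤ μ1 →
        ∀ q ∈ Set.Ici (0:ℝ),
        (1 - μ1) * RL q + μ1 * RH q ≤ (1 - μ1) * RL pHs + μ1 * RH pHs := by
      intro μ0 μ1 h hle q hq
      have h0 := h q hq
      have hr : RH q ≤ RH pHs := hRHle q hq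
      have hl : 0 ≤ RL q := hRLnn q hq
      nlinarith [mul_nonneg (by linarith : (0:ℝ) ≤ μ1 - μ0)
        (by linarith [hRLpHs] : (0:ℝ) ≤ RH pHs - RH q + RL q - RL pHs)]
    have hupstrict : ∀ μ0 μ1 : ℝ, (∀ q ∈ Set.Ici (0:ℝ),
        (1 - μ0) * RL q + μ0 * RH q ≤ (1 - μ0) * RL pHs + μ0 * RH pHs) → μ0 < μ1 →
        ∀ q ∈ Set.Ici (0:ℝ), q ≠ pHs →
        (1 - μ1) * RL q + μ1 * RH q < (1 - μ1) * RL pHs + μ1 * RH pHs := by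
      intro μ0 μ1 h hlt q hq hne
      have h0 := h q hq
      have hr : RH q < RH pHs := hRHmax q hq hne
      have hl : 0 ≤ RL q := hRLnn q hq
      nlinarith [mul_pos (by linarith : (0:ℝ) < μ1 - μ0)
        (by linarith [hRLpHs] : (0:ℝ) < RH pHs - RH q + RL q - RL pHs)]
    -- witness μ0 < 1 for which pHs is optimal
    obtain ⟨q0, hq0mem, hq0max⟩ :=
      (isCompact_Icc : IsCompact (Set.Icc (0:ℝ) pbL)).exists_isMaxOn (f := RH)
        (Set.nonempty_Icc.2 (by linarith))
        (by rw [hRH]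
            exact continuous_id.continuousOn.mul (hDHcont.mono (fun x hx => hx.1)))
    have hq0lt : RH q0 < RH pHs := by
      refine hRHmax q0 (Set.mem_Ici.2 hq0mem.1) ?_
      intro h; rw [h] at hq0mem; linarith [hq0mem.2]
    have hAc : (0:ℝ) < RL pLs + (RH pHs - RH q0) := by linarith
    set μ0 := RL pLs / (RL pLs + (RH pHs - RH q0)) with hμ0def
    have hμ0pos : 0 < μ0 := div_pos hRLpLs hAc
    have hμ0lt1 : μ0 < 1 := (div_lt_one hAc).2 (by linarith)
    have hkey : (1 - μ0) * RL pLs = μ0 * (RH pHs - RH q0) := by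
      rw [hμ0def]; field_simp; ring
    have hPμ0 : ∀ q ∈ Set.Ici (0:ℝ),
        (1 - μ0) * RL q + μ0 * RH q ≤ (1 - μ0) * RL pHs + μ0 * RH pHs := by
      intro q hq
      rw [hRLpHs]
      rcases le_or_gt q pbL with h | h
      · have h1 : RL q ≤ RL pLs := hRLle q hq
        have h2 : RH q ≤ RH q0 := isMaxOn_iff.mp hq0max q ⟨hq, h⟩
        nlinarith [mul_le_mul_of_nonneg_left h1 (by linarith : (0:ℝ) ≤ 1 - μ0),
          mul_le_mul_of_nonneg_left h2 hμ0pos.le]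
      · have h1 : RL q = 0 := hRL0 q h.le
        have h2 : RH q ≤ RH pHs := hRHle q hq
        rw [h1]
        nlinarith [mul_le_mul_of_nonneg_left h2 hμ0pos.le]
    -- the threshold
    set S : Set ℝ := {μ : ℝ | 0 ≤ μ ∧ ∀ q ∈ Set.Ici (0:ℝ),
        (1 - μ) * RL q + μ * RH q ≤ (1 - μ) * RL pHs + μ * RH pHs} with hSdef
    have hSclosed : IsClosed S := by
      have hS : S = {μ : ℝ | 0 ≤ μ} ∩ ⋂ q ∈ Set.Ici (0:ℝ),
          {μ : ℝ | (1 - μ) * RL q + μ * RH q ≤ (1 - μ) * RL pHs + μ * RH pHs} := by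
        ext μ
        simp only [hSdef, Set.mem_setOf_eq, Set.mem_inter_iff, Set.mem_iInter]
      rw [hS]
      refine (isClosed_le continuous_const continuous_id).inter ?_
      exact isClosed_biInter fun q _ => isClosed_le (by fun_prop) (by fun_prop)
    have hSbdd : BddBelow S := ⟨0, fun μ hμ => hμ.1⟩
    have hSne : S.Nonempty := ⟨μ0, hμ0pos.le, hPμ0⟩
    have hμhatS : sInf S ∈ S := hSclosed.csInf_mem hSne hSbdd
    have hμhatle : sInf S ≤ μ0 := csInf_le hSbdd ⟨hμ0pos.le, hPμ0⟩
    have hμhatpos : 0 < sInf S := by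
      rcases (hμhatS.1).lt_or_eq with h | h
      · exact h
      · exfalso
        have h2 := hμhatS.2 pLs (Set.mem_Ici.2 hpLs0.le)
        rw [← h] at h2
        rw [hRLpHs] at h2
        linarith
    refine ⟨sInf S, ⟨hμhatpos, lt_of_le_of_lt hμhatle hμ0lt1⟩, ?_, ?_⟩
    · intro μ hμ
      constructor
      · intro hP
        exact csInf_le hSbdd ⟨hμ.1, hP⟩
      · intro hle
        exact hup (sInf S) μ hμhatS.2 hle
    · intro μ _ hlt q hq hne
      exact hupstrict (sInf S) μ hμhatS.2 hlt q hq hne
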